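/- Let x, y, z be rational numbers such that 9x + 9y + 9z = 2, the numbers 5x + 9y + 11z and 11x + 9y - z are integers, and 5x² + 9y² - z² + 18xy + 22xz + 18yz = 0. Then (x,y,z) = (1/9, -1/9, 2/9) or (x,y,z) = (-1/9, 5/9, -2/9). -/

import Mathlib

/-- Step I: a class D = xE1 + yE3 + zC1 with D·E3 = 2, integral pairings with E1 and C1,
and D² = 0 must be D_I = (1/9)(E1 - E3 + 2C1) or D_II = (1/9)(-E1 + 5E3 - 2C1). -/
theorem stmt_6 (x y z : ℚ)
    (h1 : 9 * x + 9 * y + 9 * z = 2)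
    (h2 : ∃ a : ℤ, 5 * x + 9 * y + 11 * z = a)
    (h3 : ∃ c : ℤ, 11 * x + 9 * y - z = c)
    (h4 : 5 * x ^ 2 + 9 * y ^ 2 - z ^ 2 + 18 * x * y + 22 * x * z + 18 * y * z = 0) :
    (x = 1 / 9 ∧ y = -1 / 9 ∧ z = 2 / 9) ∨ (x = -1 / 9 ∧ y = 5 / 9 ∧ z = -2 / 9) := by
  obtain ⟨a, ha⟩ := h2
  obtain ⟨c, hc⟩ := h3
  have hx : x = (12 - 5 * a - c) / 18 := by linarith
  have hy : y = (6 * a + 3 * c - 14) / 18 := by linarith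
  have hz : z = (6 - a - 2 * c) / 18 := by linarith
  subst hx hy hz
  have key : 5 * (a : ℚ) ^ 2 + 2 * a * c + 2 * c ^ 2 - 24 * a - 12 * c + 28 = 0 := by
    linear_combination (-18 : ℚ) * h4
  have keyZ : 5 * a ^ 2 + 2 * a * c + 2 * c ^ 2 - 24 * a - 12 * c + 28 = 0 := by
    exact_mod_cast key
  have hb1 : 1 ≤ a := by nlinarith [sq_nonneg (4 * c + 2 * a - 12)]
  have hb2 : a ≤ 3 := by nlinarith [sq_nonneg (4 * c + 2 * a - 12)]
  have hb3 : 0 ≤ c := by nlinarith [sq_nonneg (6 * a - 12)]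
  have hb4 : c ≤ 4 := by nlinarith [sq_nonneg (6 * a - 12)]
  interval_cases a <;> interval_cases c <;> norm_num at keyZ <;> norm_num
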